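/- arXiv:2004.02491 — 2 statements merged into one kernel-verified Lean document; each statement's English description precedes it below -/
import Mathlib

section
/- Let s ≥ 1, ν ≥ 0 be integers and b ≥ 2. For d = (d_1,...,d_s) ∈ ℕ_0^s define K_d = {a ∈ ℕ_0^s : a_j < b^{d_j} for all j}, and K_ν = ⋃_{|d|=ν} K_d where |d| = d_1+...+d_s. Then for every a ∈ ℕ_0^s, the indicator 1_{a ∈ K_ν} equals ∑_{q=0}^{s-1} (-1)^q C(s-1,q) ∑_{d ∈ ℕ_0^s, |d| = ν-q} 1_{a ∈ K_d}, where inner sums with ν-q < 0 are defined to be 0. -/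
open scoped Classical


open Finset PowerSeries

lemma my_card_antidiagonalTuple (s k : ℕ) :
    (Finset.Nat.antidiagonalTuple s k).card = Nat.multichoose s k := by
  rw [← Finset.piAntidiag_univ_fin_eq_antidiagonalTuple k s,
    ← Finset.map_sym_eq_piAntidiag, Finset.card_map]
  have h : (Finset.univ : Finset (Fin s)).sym k = Finset.univ := by
    ext m; simp [Finset.mem_sym_iff]
  rw [h, Finset.card_univ, Sym.card_sym_fin_eq_multichoose]

lemma my_coeff_one_sub_X_pow (n i : ℕ) :
    (PowerSeries.coeff (R := ℤ) i) ((1 - X) ^ n) =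
      if i ≤ n then (-1) ^ i * (n.choose i : ℤ) else 0 := by
  have h : ((1 : ℤ⟦X⟧) - X) ^ n
      = ∑ k ∈ range (n + 1), PowerSeries.C (R := ℤ) ((-1) ^ k * (n.choose k : ℤ)) * X ^ k := by
    rw [sub_eq_add_neg, add_comm, add_pow]
    refine Finset.sum_congr rfl fun k hk => ?_
    rw [neg_pow]
    simp [map_mul, map_pow, map_neg, map_one, mul_comm, mul_assoc, mul_left_comm]
  rw [h, map_sum]
  simp only [PowerSeries.coeff_C_mul, PowerSeries.coeff_X_pow, mul_ite, mul_one, mul_zero]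
  simp only [eq_comm (a := i)]
  rw [Finset.sum_ite_eq' (range (n + 1)) i]
  simp [Nat.lt_succ_iff]

lemma my_key (n t : ℕ) :
    ∑ q ∈ range (n + 1), (-1 : ℤ) ^ q * (n.choose q : ℤ) *
      (if q ≤ t then ((n + (t - q)).choose n : ℤ) else 0) = 1 := by
  set u := PowerSeries.invOneSubPow ℤ (n + 1) with hu'
  set v := PowerSeries.invOneSubPow ℤ 1 with hv'
  have hvX : v.val * (1 - X : ℤ⟦X⟧) = 1 := by
    have h := v.val_inv
    rwa [PowerSeries.invOneSubPow_inv_eq_one_sub_pow, pow_one] at h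
  have h1 : (v.val) * ((1 - X : ℤ⟦X⟧) ^ (n + 1)) = (1 - X) ^ n := by
    calc v.val * ((1 - X : ℤ⟦X⟧) ^ (n + 1)) = (v.val * (1 - X)) * (1 - X) ^ n := by ring
      _ = (1 - X) ^ n := by rw [hvX, one_mul]
  have hmain : ((1 - X : ℤ⟦X⟧) ^ n) * u.val = v.val := by
    calc ((1 - X : ℤ⟦X⟧) ^ n) * u.val = v.val * ((1 - X) ^ (n + 1) * u.val) := by
          rw [← h1]; ring
      _ = v.val := by
          rw [← PowerSeries.invOneSubPow_inv_eq_one_sub_pow, u.inv_val, mul_one]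
  have hc := congrArg (PowerSeries.coeff (R := ℤ) t) hmain
  rw [PowerSeries.coeff_mul, hu', PowerSeries.invOneSubPow_val_succ_eq_mk_add_choose,
    hv', show (1 : ℕ) = 0 + 1 from rfl, PowerSeries.invOneSubPow_val_succ_eq_mk_add_choose,
    PowerSeries.coeff_mk, Finset.Nat.sum_antidiagonal_eq_sum_range_succ_mk] at hc
  simp only [PowerSeries.coeff_mk, my_coeff_one_sub_X_pow, Nat.choose_zero_right,
    Nat.cast_one] at hc
  set g : ℕ → ℤ := fun q => (if q ≤ n then (-1) ^ q * (n.choose q : ℤ) else 0) *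
    (if q ≤ t then ((n + (t - q)).choose n : ℤ) else 0) with hg'
  have hga : ∑ q ∈ range (n + 1), g q = ∑ q ∈ range (n + t + 1), g q := by
    apply Finset.sum_subset
    · intro x hx; simp only [mem_range] at *; omega
    · intro x _ hx
      have : ¬ x ≤ n := by simp only [mem_range] at hx; omega
      simp [hg', this]
  have hgb : ∑ q ∈ range (t + 1), g q = ∑ q ∈ range (n + t + 1), g q := by
    apply Finset.sum_subset
    · intro x hx; simp only [mem_range] at *; omega
    · intro x _ hx
      have : ¬ x ≤ t := by simp only [mem_range] at hx; omega
      simp [hg', this]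
  have hc2 : ∑ q ∈ range (t + 1), g q = 1 := by
    rw [← hc]
    refine Finset.sum_congr rfl fun q hq => ?_
    have hq' : q ≤ t := by simp only [mem_range] at hq; omega
    simp [hg', hq']
  calc ∑ q ∈ range (n + 1), (-1 : ℤ) ^ q * (n.choose q : ℤ) *
        (if q ≤ t then ((n + (t - q)).choose n : ℤ) else 0)
      = ∑ q ∈ range (n + 1), g q := by
        refine Finset.sum_congr rfl fun q hq => ?_
        have hq' : q ≤ n := by simp only [mem_range] at hq; omega
        simp [hg', hq', mul_assoc]
    _ = ∑ q ∈ range (t + 1), g q := by rw [hga, hgb]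
    _ = 1 := hc2

open scoped Classical in
lemma my_inner_sum (b s k : ℕ) (a m : Fin s → ℕ)
    (hm : ∀ j e, a j < b ^ e ↔ m j ≤ e) :
    (∑ d ∈ Finset.Nat.antidiagonalTuple s k, (if ∀ j, a j < b ^ d j then (1 : ℤ) else 0))
      = if (∑ j, m j) ≤ k then (Nat.multichoose s (k - ∑ j, m j) : ℤ) else 0 := by
  have hsum : (∑ d ∈ Finset.Nat.antidiagonalTuple s k,
      (if ∀ j, a j < b ^ d j then (1 : ℤ) else 0))
      = ((Finset.Nat.antidiagonalTuple s k).filter (fun d => ∀ j, m j ≤ d j)).card := by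
    rw [Finset.sum_boole]
    congr 2
    apply Finset.filter_congr
    intro d _
    exact forall_congr' fun j => hm j (d j)
  rw [hsum]
  by_cases hMk : (∑ j, m j) ≤ k
  · rw [if_pos hMk, ← my_card_antidiagonalTuple]
    congr 1
    refine Finset.card_nbij' (fun d => fun j => d j - m j)
      (fun e => fun j => e j + m j) ?_ ?_ ?_ ?_
    · intro d hd
      rw [Finset.mem_coe, Finset.mem_filter, Finset.Nat.mem_antidiagonalTuple] at hd
      rw [Finset.mem_coe, Finset.Nat.mem_antidiagonalTuple]
      rw [Finset.sum_tsub_distrib _ (fun j _ => hd.2 j), hd.1]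
    · intro e he
      rw [Finset.mem_coe, Finset.Nat.mem_antidiagonalTuple] at he
      rw [Finset.mem_coe, Finset.mem_filter, Finset.Nat.mem_antidiagonalTuple]
      constructor
      · rw [Finset.sum_add_distrib, he]
        exact Nat.sub_add_cancel hMk
      · intro j
        exact Nat.le_add_left _ _
    · intro d hd
      rw [Finset.mem_coe, Finset.mem_filter] at hd
      funext j
      have := hd.2 j
      exact Nat.sub_add_cancel this
    · intro e _
      funext j
      exact Nat.add_sub_cancel (n := e j) (m := m j)
  · rw [if_neg hMk]
    norm_cast
    rw [Finset.card_eq_zero, Finset.filter_eq_empty_iff]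
    intro d hd
    rw [Finset.Nat.mem_antidiagonalTuple] at hd
    intro hall
    exact hMk (hd ▸ Finset.sum_le_sum fun j _ => hall j)


/-- Combination principle for indicator functions: for `a ∈ ℕ₀^s`,
`1_{a ∈ K_ν} = ∑_{q=0}^{s-1} (-1)^q C(s-1,q) ∑_{|d| = ν-q} 1_{a ∈ K_d}`,
where `K_d = {a : ∀ j, a j < b ^ d j}` and `K_ν = ⋃_{|d|=ν} K_d`,
and inner sums with `ν - q < 0` are `0`. -/
theorem indicator_combination_principle (b s ν : ℕ) (hb : 2 ≤ b) (hs : 1 ≤ s)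
    (a : Fin s → ℕ) :
    (if ∃ d : Fin s → ℕ, (∑ j, d j) = ν ∧ ∀ j, a j < b ^ d j then (1 : ℤ) else 0) =
      ∑ q ∈ Finset.range s, (-1 : ℤ) ^ q * ((s - 1).choose q : ℤ) *
        (if q ≤ ν then
          ∑ d ∈ Finset.Nat.antidiagonalTuple s (ν - q),
            (if ∀ j, a j < b ^ d j then (1 : ℤ) else 0)
         else 0) := by
  obtain ⟨n, rfl⟩ : ∃ n, s = n + 1 := ⟨s - 1, by omega⟩
  set m : Fin (n + 1) → ℕ := fun j => if a j = 0 then 0 else Nat.log b (a j) + 1 with hm'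
  have hm : ∀ j e, a j < b ^ e ↔ m j ≤ e := by
    intro j e
    by_cases h : a j = 0
    · simp only [hm', h, if_true]
      exact ⟨fun _ => Nat.zero_le _, fun _ => pow_pos (by omega : 0 < b) e⟩
    · simp only [hm', h, if_false]
      rw [← Nat.log_lt_iff_lt_pow (b := b) (by omega) h]
      omega
  set M := ∑ j, m j with hM'
  have hL : (∃ d : Fin (n + 1) → ℕ, (∑ j, d j) = ν ∧ ∀ j, a j < b ^ d j) ↔ M ≤ ν := by
    constructor
    · rintro ⟨d, hd, hlt⟩
      rw [hM', ← hd]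
      exact Finset.sum_le_sum fun j _ => (hm j (d j)).mp (hlt j)
    · intro hMν
      refine ⟨Function.update m 0 (m 0 + (ν - M)), ?_, ?_⟩
      · rw [Finset.sum_update_of_mem (Finset.mem_univ 0)]
        rw [Finset.sdiff_singleton_eq_erase]
        have h2 : m 0 + ∑ j ∈ Finset.univ.erase 0, m j = M :=
          Finset.add_sum_erase _ m (Finset.mem_univ 0)
        omega
      · intro j
        rw [hm]
        rcases eq_or_ne j 0 with rfl | hj
        · rw [Function.update_self]; exact Nat.le_add_right _ _
        · rw [Function.update_of_ne hj]
  rw [if_congr hL rfl rfl]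
  by_cases hMν : M ≤ ν
  · rw [if_pos hMν]
    have hR : ∀ q ∈ Finset.range (n + 1),
        (-1 : ℤ) ^ q * ((n + 1 - 1).choose q : ℤ) *
          (if q ≤ ν then
            ∑ d ∈ Finset.Nat.antidiagonalTuple (n + 1) (ν - q),
              (if ∀ j, a j < b ^ d j then (1 : ℤ) else 0)
           else 0)
        = (-1 : ℤ) ^ q * (n.choose q : ℤ) *
          (if q ≤ ν - M then ((n + (ν - M - q)).choose n : ℤ) else 0) := by
      intro q _
      rw [my_inner_sum b (n + 1) (ν - q) a m hm, ← hM', Nat.add_sub_cancel]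
      congr 1
      by_cases h : q ≤ ν - M
      · have h1 : q ≤ ν := by omega
        have h2 : M ≤ ν - q := by omega
        rw [if_pos h1, if_pos h2, if_pos h]
        have h4 : ν - q - M = ν - M - q := by omega
        have key : Nat.multichoose (n + 1) (ν - M - q) = (n + (ν - M - q)).choose n := by
          rw [Nat.multichoose_eq]
          have h3 : n + 1 + (ν - M - q) - 1 = n + (ν - M - q) := by omega
          rw [h3, ← Nat.choose_symm (Nat.le_add_left _ n), Nat.add_sub_cancel]
        rw [h4, key]
      · rw [if_neg h]
        by_cases h1 : q ≤ ν
        · rw [if_pos h1, if_neg (by omega)]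
        · rw [if_neg h1]
    rw [Finset.sum_congr rfl hR]
    exact (my_key n (ν - M)).symm
  · rw [if_neg hMν]
    symm
    apply Finset.sum_eq_zero
    intro q _
    rw [my_inner_sum b (n + 1) (ν - q) a m hm, ← hM']
    by_cases h1 : q ≤ ν
    · rw [if_pos h1, if_neg (by omega), mul_zero]
    · rw [if_neg h1, mul_zero]
end

section
/- Define μ_α(k) for k ∈ ℕ with base-b representation k = κ'_1 b^{a_1 - 1} + ... + κ'_r b^{a_r - 1} (nonzero digits κ'_i, positions a_1 > a_2 > ... > a_r ≥ 1) by μ_α(k) = a_1 + ... + a_{min(α, r)}, and μ_α(0) = 0. Then for all k, k' ∈ ℕ_0 and α ≥ 1, μ_α(k ⊕_b k') ≥ μ_α(k) - α·μ_1(k'), where ⊕_b is digitwise addition modulo b of base-b digit vectors; in particular if k' < b^ν then μ_α(k ⊕_b k') ≥ μ_α(k) - αν. -/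
/-- The positions (counted from `1`) of the nonzero base-`b` digits of `k`. -/
def nzpos (b k : ℕ) : Finset ℕ :=
  (Finset.range (k + 1)).filter (fun a => 1 ≤ a ∧ k / b ^ (a - 1) % b ≠ 0)

/-- `μ_α(k)`: the sum of the positions of the `min(α, r)` most significant nonzero
base-`b` digits of `k` (and `μ_α(0) = 0`). -/
def mua (b α k : ℕ) : ℕ :=
  (((nzpos b k).sort (· ≥ ·)).take α).sum

/-- Digitwise addition `⊕_b` modulo `b` of the base-`b` digit vectors of `k` and `k'`. -/
def nadd (b k k' : ℕ) : ℕ :=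
  ∑ a ∈ Finset.range (k + k' + 1), ((k / b ^ a % b + k' / b ^ a % b) % b) * b ^ a

/- ## List lemmas: the sum of the top `α` elements dominates any subset of size `≤ α` -/

lemma take_succ_sum_le {a : ℕ} {l : List ℕ} (h : ∀ x ∈ l, x ≤ a) (m : ℕ) :
    (l.take (m + 1)).sum ≤ a + (l.take m).sum := by
  induction l generalizing m with
  | nil => simp
  | cons x t ih =>
    cases m with
    | zero => simpa using h x List.mem_cons_self
    | succ m =>
      simp only [List.take_succ_cons, List.sum_cons]
      have := ih (fun y hy => h y (List.mem_cons_of_mem x hy)) m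
      omega

lemma sublist_sum_le {l z : List ℕ} (hz : z.Sublist l) (hl : l.Pairwise (· ≥ ·))
    {n : ℕ} (hn : z.length ≤ n) : z.sum ≤ (l.take n).sum := by
  induction hz generalizing n with
  | slnil => simp
  | @cons z l a hzl ih =>
    rcases Nat.eq_zero_or_pos n with rfl | hpos
    · have hz0 : z = [] := List.length_eq_zero_iff.mp (Nat.le_zero.mp hn)
      simp [hz0]
    · obtain ⟨m, rfl⟩ := Nat.exists_eq_add_of_le hpos
      have h1 : z.sum ≤ (l.take (1 + m)).sum := ih hl.of_cons hn
      have h2 : (l.take (m + 1)).sum ≤ a + (l.take m).sum :=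
        take_succ_sum_le (fun x hx => (List.pairwise_cons.mp hl).1 x hx) m
      rw [Nat.add_comm 1 m] at h1
      calc z.sum ≤ (l.take (m + 1)).sum := h1
        _ ≤ a + (l.take m).sum := h2
        _ = ((a :: l).take (m + 1)).sum := by simp
        _ = ((a :: l).take (1 + m)).sum := by rw [Nat.add_comm 1 m]
  | @cons_cons z l a hzl ih =>
    cases n with
    | zero => simp at hn
    | succ m =>
      simp only [List.take_succ_cons, List.sum_cons, List.length_cons] at *
      exact Nat.add_le_add_left (ih hl.of_cons (Nat.lt_succ_iff.mp hn)) a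

/- ## Finset versions -/

lemma sum_le_top {Z X : Finset ℕ} (hZX : Z ⊆ X) {α : ℕ} (hcard : Z.card ≤ α) :
    Z.sum id ≤ ((X.sort (· ≥ ·)).take α).sum := by
  have hsub : (Z.sort (· ≥ ·)).Sublist (X.sort (· ≥ ·)) := by
    apply List.sublist_of_subperm_of_pairwise _ (Finset.pairwise_sort _ _) (Finset.pairwise_sort _ _)
    rw [← Multiset.coe_le, Finset.sort_eq, Finset.sort_eq]
    exact Finset.val_le_iff.2 hZX
  have hlen : (Z.sort (· ≥ ·)).length ≤ α := by
    rw [Finset.length_sort]; exact hcard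
  have hsum : (Z.sort (· ≥ ·)).sum = Z.sum id := by
    have h := Finset.sum_map_toList Z id
    rw [List.map_id] at h
    rw [(Finset.sort_perm_toList (r := (· ≥ ·)) (s := Z)).sum_eq, h]
  rw [← hsum]
  exact sublist_sum_le hsub (Finset.pairwise_sort _ _) hlen

lemma exists_top_subset (X : Finset ℕ) (α : ℕ) :
    ∃ Z : Finset ℕ, Z ⊆ X ∧ Z.card ≤ α ∧ Z.sum id = ((X.sort (· ≥ ·)).take α).sum := by
  set l := (X.sort (· ≥ ·)).take α with hl
  have hsub : l.Sublist (X.sort (· ≥ ·)) := List.take_sublist α _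
  have hnd : l.Nodup := hsub.nodup (Finset.sort_nodup _ _)
  refine ⟨l.toFinset, ?_, ?_, ?_⟩
  · intro x hx
    rw [List.mem_toFinset] at hx
    exact (Finset.mem_sort _).mp (hsub.subset hx)
  · rw [List.toFinset_card_of_nodup hnd]
    exact List.length_take.le.trans (min_le_left _ _)
  · rw [List.sum_toFinset id hnd, List.map_id]

/- ## Digit extraction -/

lemma sum_digits_lt {b : ℕ} (hb : 1 ≤ b) {c : ℕ → ℕ} (hc : ∀ a, c a < b) (N : ℕ) :
    ∑ a ∈ Finset.range N, c a * b ^ a < b ^ N := by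
  obtain ⟨b', rfl⟩ : ∃ b', b = b' + 1 := ⟨b - 1, by omega⟩
  induction N with
  | zero => simp
  | succ N ih =>
    rw [Finset.sum_range_succ, pow_succ]
    have h1 : c N * (b' + 1) ^ N ≤ b' * (b' + 1) ^ N :=
      Nat.mul_le_mul_right _ (by have := hc N; omega)
    calc ∑ a ∈ Finset.range N, c a * (b' + 1) ^ a + c N * (b' + 1) ^ N
        < (b' + 1) ^ N + b' * (b' + 1) ^ N := by omega
      _ = (b' + 1) ^ N * (b' + 1) := by ring

lemma sum_digits_div_mod {b : ℕ} (hb : 2 ≤ b) (c : ℕ → ℕ) (hc : ∀ a, c a < b)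
    (N e : ℕ) (he : e < N) :
    (∑ a ∈ Finset.range N, c a * b ^ a) / b ^ e % b = c e := by
  induction e generalizing c N with
  | zero =>
    obtain ⟨M, rfl⟩ : ∃ M, N = M + 1 := ⟨N - 1, by omega⟩
    rw [Finset.sum_range_succ']
    simp only [pow_zero, Nat.div_one, mul_one]
    have hrw : ∑ i ∈ Finset.range M, c (i + 1) * b ^ (i + 1)
        = b * ∑ i ∈ Finset.range M, c (i + 1) * b ^ i := by
      rw [Finset.mul_sum]; apply Finset.sum_congr rfl; intro i _; ring
    rw [hrw, Nat.mul_add_mod]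
    exact Nat.mod_eq_of_lt (hc 0)
  | succ e ih =>
    obtain ⟨M, rfl⟩ : ∃ M, N = M + 1 := ⟨N - 1, by omega⟩
    rw [Finset.sum_range_succ']
    have hrw : ∑ i ∈ Finset.range M, c (i + 1) * b ^ (i + 1)
        = b * ∑ i ∈ Finset.range M, c (i + 1) * b ^ i := by
      rw [Finset.mul_sum]; apply Finset.sum_congr rfl; intro i _; ring
    rw [hrw, pow_zero, mul_one, pow_succ, Nat.mul_comm (b ^ e) b,
      ← Nat.div_div_eq_div_mul, Nat.mul_add_div (by omega), Nat.div_eq_of_lt (hc 0),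
      Nat.add_zero]
    exact ih (fun a => c (a + 1)) (fun a => hc (a + 1)) M (by omega)

lemma nadd_digit {b : ℕ} (hb : 2 ≤ b) (k k' e : ℕ) :
    nadd b k k' / b ^ e % b = (k / b ^ e % b + k' / b ^ e % b) % b := by
  have hc : ∀ a, (k / b ^ a % b + k' / b ^ a % b) % b < b := fun a => Nat.mod_lt _ (by omega)
  rcases lt_or_ge e (k + k' + 1) with he | he
  · exact sum_digits_div_mod hb _ hc _ _ he
  · have hpow : b ^ (k + k' + 1) ≤ b ^ e := Nat.pow_le_pow_right (by omega) he
    have hbig : k + k' + 1 < b ^ (k + k' + 1) := Nat.lt_pow_self (by omega)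
    have h1 : nadd b k k' < b ^ e :=
      lt_of_lt_of_le (sum_digits_lt (by omega) hc _) hpow
    have h2 : k < b ^ e := by omega
    have h3 : k' < b ^ e := by omega
    rw [Nat.div_eq_of_lt h1, Nat.div_eq_of_lt h2, Nat.div_eq_of_lt h3]
    simp

/- ## `nzpos` membership -/

lemma mem_nzpos {b : ℕ} (hb : 2 ≤ b) {n a : ℕ} :
    a ∈ nzpos b n ↔ 1 ≤ a ∧ n / b ^ (a - 1) % b ≠ 0 := by
  unfold nzpos
  rw [Finset.mem_filter, Finset.mem_range]
  constructor
  · tauto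
  · rintro ⟨h1, h2⟩
    refine ⟨?_, h1, h2⟩
    have hd : n / b ^ (a - 1) ≠ 0 := fun h => h2 (by rw [h]; simp)
    have hle : b ^ (a - 1) ≤ n := by
      by_contra hlt
      exact hd (Nat.div_eq_of_lt (by omega))
    have h2a : a - 1 < 2 ^ (a - 1) := Nat.lt_two_pow_self
    have h2b : 2 ^ (a - 1) ≤ b ^ (a - 1) := Nat.pow_le_pow_left hb _
    omega

lemma pos_le_of_digit_ne {b n a ν : ℕ} (h1 : 1 ≤ a)
    (h2 : n / b ^ (a - 1) % b ≠ 0) (hn : n < b ^ ν) (hb : 2 ≤ b) : a ≤ ν := by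
  have hd : n / b ^ (a - 1) ≠ 0 := fun h => h2 (by rw [h]; simp)
  have hle : b ^ (a - 1) ≤ n := by
    by_contra hlt
    exact hd (Nat.div_eq_of_lt (by omega))
  have hlt : b ^ (a - 1) < b ^ ν := lt_of_le_of_lt hle hn
  have := (Nat.pow_lt_pow_iff_right (by omega : 1 < b)).mp hlt
  omega

/- ## Main theorem -/

/-- `μ_α(k ⊕_b k') ≥ μ_α(k) - α μ_1(k')`; in particular, if `k' < b^ν` then
`μ_α(k ⊕_b k') ≥ μ_α(k) - α ν`. -/
theorem mua_nadd_lower_bound (b α : ℕ) (hb : 2 ≤ b) (hα : 1 ≤ α) (k k' : ℕ) :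
    ((mua b α k : ℤ) - (α : ℤ) * (mua b 1 k' : ℤ) ≤ (mua b α (nadd b k k') : ℤ)) ∧
    ∀ ν : ℕ, k' < b ^ ν →
      (mua b α k : ℤ) - (α : ℤ) * (ν : ℤ) ≤ (mua b α (nadd b k k') : ℤ) := by
  have key : ∀ m : ℕ, (∀ a, m < a → k' / b ^ (a - 1) % b = 0) →
      (mua b α k : ℤ) - (α : ℤ) * (m : ℤ) ≤ (mua b α (nadd b k k') : ℤ) := by
    intro m hm
    obtain ⟨Z, hZsub, hZcard, hZsum⟩ := exists_top_subset (nzpos b k) α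
    have hZsum' : Z.sum id = mua b α k := hZsum
    have hZ'sub : Z.filter (fun x => m < x) ⊆ nzpos b (nadd b k k') := by
      intro x hx
      rw [Finset.mem_filter] at hx
      obtain ⟨hxZ, hxm⟩ := hx
      have hxk := (mem_nzpos hb).mp (hZsub hxZ)
      rw [mem_nzpos hb]
      refine ⟨hxk.1, ?_⟩
      rw [nadd_digit hb, hm x hxm, Nat.add_zero, Nat.mod_mod_of_dvd _ dvd_rfl]
      exact hxk.2
    have h1 : (Z.filter (fun x => m < x)).sum id ≤ mua b α (nadd b k k') :=
      sum_le_top hZ'sub (le_trans (Finset.card_filter_le _ _) hZcard)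
    have h2 : (Z.filter (fun x => ¬ m < x)).sum id ≤ α * m := by
      calc (Z.filter (fun x => ¬ m < x)).sum id
          ≤ (Z.filter (fun x => ¬ m < x)).card • m :=
            Finset.sum_le_card_nsmul _ _ _ (fun x hx => by
              rw [Finset.mem_filter] at hx; simp only [id]; omega)
        _ ≤ α * m := by
            rw [smul_eq_mul]
            exact Nat.mul_le_mul_right _ (le_trans (Finset.card_filter_le _ _) hZcard)
    have h3 : (Z.filter (fun x => m < x)).sum id + (Z.filter (fun x => ¬ m < x)).sum id
        = Z.sum id := by
      simpa using Finset.sum_filter_add_sum_filter_not Z (fun x => m < x) id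
    have hnat : mua b α k ≤ mua b α (nadd b k k') + α * m := by omega
    push_cast
    omega
  constructor
  · apply key
    intro a ha
    by_contra hne
    have ha1 : 1 ≤ a := by omega
    have hamem : a ∈ nzpos b k' := (mem_nzpos hb).mpr ⟨ha1, hne⟩
    have : ({a} : Finset ℕ).sum id ≤ mua b 1 k' :=
      sum_le_top (Finset.singleton_subset_iff.mpr hamem) (by simp)
    simp only [Finset.sum_singleton, id] at this
    omega
  · intro ν hν
    apply key
    intro a ha
    by_contra hne
    have ha1 : 1 ≤ a := by omega
    have := pos_le_of_digit_ne ha1 hne hν hb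
    omega
end
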